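/- Let a, b > 0 and consider the isosceles triangle in ℝ² with vertices A = (0, a), B = (−b, 0), C = (b, 0). Then for every point P = (x, y) in ℝ² and every real k, the equation W(P) = k holds if and only if x²/(a² + 3b²) + (y − 2ab²/(a² + 3b²))²/(2a²) = ((a² + b²)·k − 2a²b²)/(2a²·(a² + 3b²)) + 2b⁴/(a² + 3b²)². -/

import Mathlib

noncomputable section

/-- The point `(x, y)` of the Euclidean plane `ℝ²`. -/
def pt (x y : ℝ) : EuclideanSpace ℝ (Fin 2) :=
  (WithLp.equiv 2 (Fin 2 → ℝ)).symm ![x, y]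

/-- The line through `X` and `Y`, i.e. the affine span of `{X, Y}`, as a set. -/
def lineThrough (X Y : EuclideanSpace ℝ (Fin 2)) : Set (EuclideanSpace ℝ (Fin 2)) :=
  (affineSpan ℝ {X, Y} : AffineSubspace ℝ (EuclideanSpace ℝ (Fin 2)))

/-- The distance sum function of the triangle `ABC`:
`V(P) = dist(P, line BC) + dist(P, line CA) + dist(P, line AB)`. -/
def vSum (A B C P : EuclideanSpace ℝ (Fin 2)) : ℝ :=
  Metric.infDist P (lineThrough B C) + Metric.infDist P (lineThrough C A) +
    Metric.infDist P (lineThrough A B)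

/-- The squared-distance sum function of the triangle `ABC`:
`W(P) = dist(P, line BC)² + dist(P, line CA)² + dist(P, line AB)²`. -/
def wSum (A B C P : EuclideanSpace ℝ (Fin 2)) : ℝ :=
  Metric.infDist P (lineThrough B C) ^ 2 + Metric.infDist P (lineThrough C A) ^ 2 +
    Metric.infDist P (lineThrough A B) ^ 2

lemma pt_apply0 (x y : ℝ) : pt x y 0 = x := rfl
lemma pt_apply1 (x y : ℝ) : pt x y 1 = y := rfl

lemma dist_sq (P Q : EuclideanSpace ℝ (Fin 2)) :
    dist P Q ^ 2 = (P 0 - Q 0) ^ 2 + (P 1 - Q 1) ^ 2 := by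
  rw [EuclideanSpace.dist_eq, Real.sq_sqrt (by positivity)]
  simp [Fin.sum_univ_two, Real.dist_eq, sq_abs]

lemma infDist_sq_line (x1 y1 x2 y2 : ℝ) (h : (x2 - x1) ^ 2 + (y2 - y1) ^ 2 ≠ 0)
    (P : EuclideanSpace ℝ (Fin 2)) :
    Metric.infDist P (lineThrough (pt x1 y1) (pt x2 y2)) ^ 2 =
      ((x2 - x1) * (P 1 - y1) - (y2 - y1) * (P 0 - x1)) ^ 2
        / ((x2 - x1) ^ 2 + (y2 - y1) ^ 2) := by
  have hL : 0 < (x2 - x1) ^ 2 + (y2 - y1) ^ 2 := lt_of_le_of_ne (by positivity) (Ne.symm h)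
  set dx := x2 - x1 with hdx
  set dy := y2 - y1 with hdy
  set L := dx ^ 2 + dy ^ 2 with hLdef
  set wx := P 0 - x1 with hwx
  set wy := P 1 - y1 with hwy
  set t0 := (wx * dx + wy * dy) / L with ht0
  set Q : EuclideanSpace ℝ (Fin 2) := pt (x1 + t0 * dx) (y1 + t0 * dy) with hQ
  have hmemgen : ∀ r : ℝ, pt (x1 + r * dx) (y1 + r * dy) ∈ lineThrough (pt x1 y1) (pt x2 y2) := by
    intro r
    have hmem := AffineMap.lineMap_mem_affineSpan_pair (k := ℝ) r (pt x1 y1) (pt x2 y2)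
    have hQeq : pt (x1 + r * dx) (y1 + r * dy) = AffineMap.lineMap (pt x1 y1) (pt x2 y2) r := by
      ext i
      simp only [AffineMap.lineMap_apply, vsub_eq_sub, vadd_eq_add, PiLp.add_apply,
        PiLp.smul_apply, PiLp.sub_apply, smul_eq_mul]
      fin_cases i <;>
        · simp [pt]
          ring
    rw [hQeq]; exact hmem
  have hQmem : Q ∈ lineThrough (pt x1 y1) (pt x2 y2) := hmemgen t0
  have key : ∀ R ∈ lineThrough (pt x1 y1) (pt x2 y2), dist P Q ≤ dist P R := by
    intro R hR
    have hR' : R -ᵥ pt x1 y1 ∈ vectorSpan ℝ ({pt x1 y1, pt x2 y2} : Set (EuclideanSpace ℝ (Fin 2))) := by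
      rw [← direction_affineSpan]
      exact (AffineSubspace.vsub_right_mem_direction_iff_mem
        (left_mem_affineSpan_pair ℝ _ _) _).mpr hR
    rw [mem_vectorSpan_pair_rev] at hR'
    obtain ⟨r, hr⟩ := hR'
    have hr0 := congrArg (fun f : EuclideanSpace ℝ (Fin 2) => f 0) hr
    have hr1 := congrArg (fun f : EuclideanSpace ℝ (Fin 2) => f 1) hr
    simp only [vsub_eq_sub, PiLp.smul_apply, PiLp.sub_apply, pt_apply0, pt_apply1,
      smul_eq_mul] at hr0 hr1
    have hR0 : R 0 = x1 + r * dx := by rw [hdx]; linarith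
    have hR1 : R 1 = y1 + r * dy := by rw [hdy]; linarith
    have h1 : dist P Q ^ 2 ≤ dist P R ^ 2 := by
      rw [dist_sq, dist_sq, hR0, hR1, hQ, pt_apply0, pt_apply1]
      have hT : t0 * L = wx * dx + wy * dy := by
        rw [ht0]; field_simp
      have h0 : wx * dx + wy * dy - t0 * L = 0 := by linarith
      have h5 : (r - t0) * (wx * dx + wy * dy - t0 * L) = 0 := by rw [h0, mul_zero]
      have ea : P 0 - (x1 + t0 * dx) = wx - t0 * dx := by rw [hwx]; ring
      have eb : P 1 - (y1 + t0 * dy) = wy - t0 * dy := by rw [hwy]; ring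
      have ec : P 0 - (x1 + r * dx) = wx - r * dx := by rw [hwx]; ring
      have ed : P 1 - (y1 + r * dy) = wy - r * dy := by rw [hwy]; ring
      rw [ea, eb, ec, ed]
      have h6 : (r - t0) * (wx * dx + wy * dy - t0 * (dx ^ 2 + dy ^ 2)) = 0 := by
        rw [← hLdef]; exact h5
      nlinarith [sq_nonneg ((r - t0) * dx), sq_nonneg ((r - t0) * dy), h6]
    have h2 := Real.sqrt_le_sqrt h1
    rwa [Real.sqrt_sq dist_nonneg, Real.sqrt_sq dist_nonneg] at h2
  have hne : Nonempty (lineThrough (pt x1 y1) (pt x2 y2)) := ⟨⟨Q, hQmem⟩⟩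
  have hinf : Metric.infDist P (lineThrough (pt x1 y1) (pt x2 y2)) = dist P Q := by
    refine le_antisymm (Metric.infDist_le_dist_of_mem hQmem) ?_
    rw [Metric.infDist_eq_iInf]
    exact le_ciInf fun y => key y y.2
  rw [hinf, dist_sq, hQ, pt_apply0, pt_apply1]
  have e0 : P 0 - (x1 + t0 * dx) = wx - t0 * dx := by rw [hwx]; ring
  have e1 : P 1 - (y1 + t0 * dy) = wy - t0 * dy := by rw [hwy]; ring
  rw [e0, e1, ht0]
  have hdxy : dx * wy - dy * wx = dx * (P 1 - y1) - dy * (P 0 - x1) := by rw [hwx, hwy]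
  field_simp
  ring

/-- **Equation (3.5).** For the isosceles triangle with vertices `(0,a)`, `(−b,0)`, `(b,0)`,
`W(x,y) = k` iff
`x²/(a²+3b²) + (y − 2ab²/(a²+3b²))²/(2a²) = ((a²+b²)k − 2a²b²)/(2a²(a²+3b²)) + 2b⁴/(a²+3b²)²`. -/
theorem stmt_12 (a b : ℝ) (ha : 0 < a) (hb : 0 < b) :
    ∀ (P : EuclideanSpace ℝ (Fin 2)) (k : ℝ),
      wSum (pt 0 a) (pt (-b) 0) (pt b 0) P = k ↔
        (P 0) ^ 2 / (a ^ 2 + 3 * b ^ 2)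
            + (P 1 - 2 * a * b ^ 2 / (a ^ 2 + 3 * b ^ 2)) ^ 2 / (2 * a ^ 2)
          = ((a ^ 2 + b ^ 2) * k - 2 * a ^ 2 * b ^ 2) / (2 * a ^ 2 * (a ^ 2 + 3 * b ^ 2))
              + 2 * b ^ 4 / (a ^ 2 + 3 * b ^ 2) ^ 2 := by
  intro P k
  have hab : a ^ 2 + b ^ 2 ≠ 0 := by positivity
  have hab3 : a ^ 2 + 3 * b ^ 2 ≠ 0 := by positivity
  have h1 : (b - -b) ^ 2 + ((0 : ℝ) - 0) ^ 2 ≠ 0 := by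
    have : (b - -b) ^ 2 + ((0 : ℝ) - 0) ^ 2 = 4 * b ^ 2 := by ring
    rw [this]; positivity
  have h2 : ((0 : ℝ) - b) ^ 2 + (a - 0) ^ 2 ≠ 0 := by
    have : ((0 : ℝ) - b) ^ 2 + (a - 0) ^ 2 = a ^ 2 + b ^ 2 := by ring
    rw [this]; positivity
  have h3 : (-b - 0) ^ 2 + ((0 : ℝ) - a) ^ 2 ≠ 0 := by
    have : (-b - 0) ^ 2 + ((0 : ℝ) - a) ^ 2 = a ^ 2 + b ^ 2 := by ring
    rw [this]; positivity
  unfold wSum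
  rw [infDist_sq_line (-b) 0 b 0 h1 P, infDist_sq_line b 0 0 a h2 P,
    infDist_sq_line 0 a (-b) 0 h3 P]
  set x := P 0
  set y := P 1
  constructor
  · intro h
    rw [← h]
    field_simp
    ring
  · intro h
    have hk : k = ((x ^ 2 / (a ^ 2 + 3 * b ^ 2)
            + (y - 2 * a * b ^ 2 / (a ^ 2 + 3 * b ^ 2)) ^ 2 / (2 * a ^ 2)
          - 2 * b ^ 4 / (a ^ 2 + 3 * b ^ 2) ^ 2) * (2 * a ^ 2 * (a ^ 2 + 3 * b ^ 2))
          + 2 * a ^ 2 * b ^ 2) / (a ^ 2 + b ^ 2) := by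
      rw [h]
      field_simp
      ring
    rw [hk]
    field_simp
    ring
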